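/- Let ν be a Borel probability measure on (0,∞) with ∫ |log λ| dν(λ) < ∞, and for each S > 0 let μ(S) > 0 be the unique water level, i.e., ∫ max(1/μ(S) − 1/λ, 0) dν(λ) = S. Then lim_{S→∞} [ ∫ max(log(λ/μ(S)), 0) dν(λ) − log S ] = ∫ log λ dν(λ). That is, at high SNR the waterfilling capacity equals log S plus the mean log-channel-gain, up to a vanishing error. -/

import Mathlib

open MeasureTheory Real Filter
open Set


lemma wf_ae_pos (ν : Measure ℝ) (hν : ν (Set.Iic 0) = 0) : ∀ᵐ l ∂ν, 0 < l := by
  rw [ae_iff]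
  convert hν using 2
  ext l; simp [not_lt]

lemma wf_mono_tendsto (φ : ℝ → ℝ)
    (hmono : ∀ s t : ℝ, 0 < s → s ≤ t → φ s ≤ φ t)
    (h0 : ∀ t : ℝ, 0 < t → 0 ≤ φ t)
    (hseq : Tendsto (fun n : ℕ => φ ((n + 1 : ℝ)⁻¹)) atTop (nhds 0)) :
    Tendsto φ (nhdsWithin 0 (Set.Ioi 0)) (nhds 0) := by
  rw [Metric.tendsto_nhdsWithin_nhds]
  intro ε hε
  obtain ⟨N, hN⟩ := (Metric.tendsto_atTop.mp hseq) ε hε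
  have hδ : (0:ℝ) < (N + 1 : ℝ)⁻¹ := by positivity
  refine ⟨(N + 1 : ℝ)⁻¹, hδ, fun t ht hdist => ?_⟩
  have ht0 : (0:ℝ) < t := ht
  have hlt : t < (N + 1 : ℝ)⁻¹ := by
    have := hdist
    rw [Real.dist_eq, sub_zero, abs_of_pos ht0] at this
    exact this
  have h1 : φ t ≤ φ ((N + 1 : ℝ)⁻¹) := hmono _ _ ht0 hlt.le
  have h2 : dist (φ ((N + 1 : ℝ)⁻¹)) 0 < ε := hN N le_rfl
  rw [Real.dist_eq, sub_zero] at h2 ⊢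
  have := h0 t ht0
  rw [abs_of_nonneg this]
  calc φ t ≤ φ ((N + 1 : ℝ)⁻¹) := h1
    _ ≤ |φ ((N + 1 : ℝ)⁻¹)| := le_abs_self _
    _ < ε := h2

-- P t = ∫ l in Iic t, |log l| ∂ν tends to 0 as t → 0+
lemma wf_P_tendsto (ν : Measure ℝ) [IsProbabilityMeasure ν] (hν : ν (Set.Iic 0) = 0)
    (hlog : Integrable (fun l => Real.log l) ν) :
    Tendsto (fun t => ∫ l in Set.Iic t, |Real.log l| ∂ν) (nhdsWithin 0 (Set.Ioi 0)) (nhds 0) := by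
  have habs : Integrable (fun l => |Real.log l|) ν := hlog.abs
  have hpos : ∀ᵐ l ∂ν, 0 < l := by
    rw [ae_iff]; convert hν using 2; ext l; simp [not_lt]
  apply wf_mono_tendsto
  · intro s t hs hst
    exact setIntegral_mono_set habs.integrableOn
      (Filter.Eventually.of_forall fun l => abs_nonneg _)
      ((Set.Iic_subset_Iic.2 hst).eventuallyLE)
  · intro t ht
    exact setIntegral_nonneg measurableSet_Iic fun l _ => abs_nonneg _
  · have : ∀ n : ℕ, ∫ l in Set.Iic ((n + 1 : ℝ)⁻¹), |Real.log l| ∂ν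
        = ∫ l, Set.indicator (Set.Iic ((n + 1 : ℝ)⁻¹)) (fun l => |Real.log l|) l ∂ν := by
      intro n; rw [integral_indicator measurableSet_Iic]
    simp only [this]
    have h0 : (0:ℝ) = ∫ l, (0:ℝ) ∂ν := by simp
    rw [h0]
    apply tendsto_integral_of_dominated_convergence (fun l => |Real.log l|)
    · intro n
      exact (habs.aestronglyMeasurable).indicator measurableSet_Iic
    · exact habs
    · intro n
      filter_upwards with l
      calc ‖Set.indicator (Set.Iic ((n + 1 : ℝ)⁻¹)) (fun l => |Real.log l|) l‖
          ≤ ‖|Real.log l|‖ := norm_indicator_le_norm_self _ _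
        _ = |Real.log l| := by rw [Real.norm_eq_abs, abs_abs]
    · filter_upwards [hpos] with l hl
      have : ∀ᶠ n : ℕ in atTop, Set.indicator (Set.Iic ((n + 1 : ℝ)⁻¹)) (fun l => |Real.log l|) l = 0 := by
        obtain ⟨N, hN⟩ := exists_nat_gt (1 / l)
        filter_upwards [eventually_ge_atTop N] with n hn
        apply Set.indicator_of_notMem
        simp only [Set.mem_Iic, not_le]
        have h1 : 1 / l < (n + 1 : ℝ) := lt_of_lt_of_le hN (by exact_mod_cast Nat.le_succ_of_le hn)
        rw [div_lt_iff₀ hl] at h1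
        rw [inv_lt_iff_one_lt_mul₀ (by positivity)]
        calc (1:ℝ) < (n+1) * l := h1
          _ = l * (n+1) := mul_comm _ _
      exact Tendsto.congr' (this.mono fun n h => h.symm) tendsto_const_nhds

-- key inequality: ν(Iic t) * (-log t) ≤ P t for 0 < t < 1
lemma wf_key_ineq (ν : Measure ℝ) [IsProbabilityMeasure ν] (hν : ν (Set.Iic 0) = 0)
    (hlog : Integrable (fun l => Real.log l) ν) {t : ℝ} (ht0 : 0 < t) (ht1 : t < 1) :
    (ν (Set.Iic t)).toReal * (-Real.log t) ≤ ∫ l in Set.Iic t, |Real.log l| ∂ν := by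
  have hpos : ∀ᵐ l ∂ν, 0 < l := by
    rw [ae_iff]; convert hν using 2; ext l; simp [not_lt]
  have h1 : (ν (Set.Iic t)).toReal * (-Real.log t) = ∫ _ in Set.Iic t, (-Real.log t) ∂ν := by
    rw [setIntegral_const]; simp [mul_comm, measureReal_def]
  rw [h1]
  apply integral_mono_ae (integrable_const _) (hlog.abs.integrableOn)
  have hmem : ∀ᵐ l ∂ν.restrict (Set.Iic t), l ∈ Set.Iic t :=
    ae_restrict_mem measurableSet_Iic
  filter_upwards [hmem, ae_restrict_of_ae hpos] with l hlt hl0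
  have hle : Real.log l ≤ Real.log t := Real.log_le_log hl0 hlt
  have hneg : Real.log l < 0 := lt_of_le_of_lt hle (Real.log_neg ht0 ht1)
  rw [abs_of_neg hneg]
  linarith

-- integrability of 1/l on Ioi m
lemma wf_int_inv (ν : Measure ℝ) [IsProbabilityMeasure ν] {m : ℝ} (hm : 0 < m) :
    IntegrableOn (fun l : ℝ => 1 / l) (Set.Ioi m) ν := by
  have hc : IntegrableOn (fun _ : ℝ => 1 / m) (Set.Ioi m) ν :=
    integrableOn_const (measure_ne_top _ _)
  apply hc.mono'
  · simp only [one_div]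
    exact measurable_inv.aestronglyMeasurable
  · filter_upwards [ae_restrict_mem measurableSet_Ioi] with l hl
    have hl0 : 0 < l := lt_trans hm hl
    rw [Real.norm_eq_abs, abs_of_pos (by positivity)]
    exact one_div_le_one_div_of_le hm (le_of_lt hl)


lemma wf_constraint (ν : Measure ℝ) [IsProbabilityMeasure ν] (hν : ν (Set.Iic 0) = 0)
    {m : ℝ} (hm : 0 < m) :
    ∫ l, max (1 / m - 1 / l) 0 ∂ν
      = (ν (Set.Ioi m)).toReal * (1 / m) - ∫ l in Set.Ioi m, 1 / l ∂ν := by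
  have hpos : ∀ᵐ l ∂ν, 0 < l := by
    rw [ae_iff]; convert hν using 2; ext l; simp [not_lt]
  have h1 : ∫ l, max (1 / m - 1 / l) 0 ∂ν
      = ∫ l, Set.indicator (Set.Ioi m) (fun l => 1 / m - 1 / l) l ∂ν := by
    apply integral_congr_ae
    filter_upwards [hpos] with l hl0
    rcases lt_or_ge m l with h | h
    · rw [Set.indicator_of_mem (Set.mem_Ioi.2 h)]
      have : 1 / l ≤ 1 / m := one_div_le_one_div_of_le hm h.le
      rw [max_eq_left (by linarith)]
    · rw [Set.indicator_of_notMem (by simp [Set.mem_Ioi]; exact h)]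
      have : 1 / m ≤ 1 / l := one_div_le_one_div_of_le hl0 h
      rw [max_eq_right (by linarith)]
  rw [h1, integral_indicator measurableSet_Ioi]
  rw [integral_sub (show IntegrableOn (fun _ : ℝ => 1 / m) (Set.Ioi m) ν from integrableOn_const (measure_ne_top _ _)) (wf_int_inv ν hm)]
  rw [setIntegral_const]
  simp [mul_comm, measureReal_def]

-- capacity rewrite
lemma wf_capacity (ν : Measure ℝ) [IsProbabilityMeasure ν] (hν : ν (Set.Iic 0) = 0)
    (hlog : Integrable (fun l => Real.log l) ν) {m : ℝ} (hm : 0 < m) :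
    ∫ l, max (Real.log (l / m)) 0 ∂ν
      = (∫ l in Set.Ioi m, Real.log l ∂ν) - (ν (Set.Ioi m)).toReal * Real.log m := by
  have hpos : ∀ᵐ l ∂ν, 0 < l := by
    rw [ae_iff]; convert hν using 2; ext l; simp [not_lt]
  have h1 : ∫ l, max (Real.log (l / m)) 0 ∂ν
      = ∫ l, Set.indicator (Set.Ioi m) (fun l => Real.log l - Real.log m) l ∂ν := by
    apply integral_congr_ae
    filter_upwards [hpos] with l hl0
    rcases lt_or_ge m l with h | h
    · rw [Set.indicator_of_mem (Set.mem_Ioi.2 h)]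
      rw [Real.log_div (ne_of_gt hl0) (ne_of_gt hm)]
      have : Real.log m ≤ Real.log l := Real.log_le_log hm h.le
      rw [max_eq_left (by linarith)]
    · rw [Set.indicator_of_notMem (by simp [Set.mem_Ioi]; exact h)]
      have hdiv : l / m ≤ 1 := (div_le_one hm).2 h
      rw [max_eq_right (Real.log_nonpos (by positivity) hdiv)]
  rw [h1, integral_indicator measurableSet_Ioi]
  rw [integral_sub hlog.integrableOn (integrableOn_const (measure_ne_top _ _))]
  rw [setIntegral_const]
  simp [mul_comm, measureReal_def]


lemma wf_H_bound (ν : Measure ℝ) [IsProbabilityMeasure ν] {m : ℝ} (hm : 0 < m) :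
    m * ∫ l in Set.Ioi m, 1 / l ∂ν
      ≤ (ν (Set.Iic (Real.sqrt m))).toReal + Real.sqrt m := by
  have hsm : 0 < Real.sqrt m := Real.sqrt_pos.2 hm
  set g : ℝ → ℝ := fun l => Set.indicator (Set.Iic (Real.sqrt m)) (fun _ => (1:ℝ)) l + Real.sqrt m with hg
  have hgint : Integrable g ν := by
    apply Integrable.add _ (integrable_const _)
    exact (integrable_const (1:ℝ)).indicator measurableSet_Iic
  have h0 : m * ∫ l in Set.Ioi m, 1 / l ∂ν = ∫ l in Set.Ioi m, m * (1 / l) ∂ν := by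
    rw [integral_const_mul]
  rw [h0]
  have step1 : ∫ l in Set.Ioi m, m * (1 / l) ∂ν ≤ ∫ l in Set.Ioi m, g l ∂ν := by
    apply setIntegral_mono_on ((wf_int_inv ν hm).const_mul m) hgint.integrableOn
      measurableSet_Ioi
    intro l hl
    have hlm : m < l := hl
    have hl0 : 0 < l := lt_trans hm hlm
    rcases le_or_gt l (Real.sqrt m) with h | h
    · have : m * (1 / l) ≤ 1 := by
        rw [mul_one_div, div_le_one hl0]; exact hlm.le
      simp only [hg, Set.indicator_of_mem (Set.mem_Iic.2 h)]
      linarith [hsm.le]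
    · have : m * (1 / l) ≤ Real.sqrt m := by
        rw [mul_one_div]
        calc m / l ≤ m / Real.sqrt m := by
              apply div_le_div_of_nonneg_left hm.le hsm h.le
          _ = Real.sqrt m := Real.div_sqrt
      have hni : l ∉ Set.Iic (Real.sqrt m) := by simp only [Set.mem_Iic, not_le]; exact h
      simp only [hg, Set.indicator_of_notMem hni]
      linarith
  have step2 : ∫ l in Set.Ioi m, g l ∂ν ≤ ∫ l, g l ∂ν := by
    apply setIntegral_le_integral hgint
    filter_upwards with l
    simp only [Pi.zero_apply, hg]
    have : (0:ℝ) ≤ Set.indicator (Set.Iic (Real.sqrt m)) (fun _ => (1:ℝ)) l :=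
      Set.indicator_nonneg (fun _ _ => zero_le_one) l
    linarith
  have step3 : ∫ l, g l ∂ν = (ν (Set.Iic (Real.sqrt m))).toReal + Real.sqrt m := by
    simp only [Pi.zero_apply, hg]
    rw [integral_add ((integrable_const (1:ℝ)).indicator measurableSet_Iic) (integrable_const _)]
    rw [integral_indicator measurableSet_Iic, setIntegral_const, integral_const]
    simp [measure_univ, measureReal_def]
  linarith



lemma wf_q_tendsto (ν : Measure ℝ) [IsProbabilityMeasure ν] (hν : ν (Set.Iic 0) = 0)
    (hlog : Integrable (fun l => Real.log l) ν) (r : ℝ → ℝ)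
    (hr : Tendsto r atTop (nhdsWithin 0 (Set.Ioi 0))) :
    Tendsto (fun S => (ν (Set.Iic (r S))).toReal) atTop (nhds 0) := by
  have hPr : Tendsto (fun S => ∫ l in Set.Iic (r S), |Real.log l| ∂ν) atTop (nhds 0) :=
    (wf_P_tendsto ν hν hlog).comp hr
  have hrpos : ∀ᶠ S in atTop, 0 < r S :=
    hr.eventually (eventually_mem_nhdsWithin)
  have hrlt : ∀ᶠ S in atTop, r S < 1/2 :=
    (hr.mono_right nhdsWithin_le_nhds).eventually_lt_const (by norm_num)
  have hlog2 : (0:ℝ) < Real.log 2 := Real.log_pos (by norm_num)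
  apply squeeze_zero' (Filter.Eventually.of_forall fun S => ENNReal.toReal_nonneg)
  · filter_upwards [hrpos, hrlt] with S h0 h1
    have hk := wf_key_ineq ν hν hlog h0 (by linarith)
    have hl2 : Real.log 2 ≤ -Real.log (r S) := by
      have : Real.log (r S) ≤ Real.log (1/2) := Real.log_le_log h0 h1.le
      rw [Real.log_div one_ne_zero two_ne_zero, Real.log_one] at this
      linarith
    have hq0 : (0:ℝ) ≤ (ν (Set.Iic (r S))).toReal := ENNReal.toReal_nonneg
    have : (ν (Set.Iic (r S))).toReal * Real.log 2
        ≤ ∫ l in Set.Iic (r S), |Real.log l| ∂ν := by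
      calc (ν (Set.Iic (r S))).toReal * Real.log 2
          ≤ (ν (Set.Iic (r S))).toReal * (-Real.log (r S)) := by
            apply mul_le_mul_of_nonneg_left hl2 hq0
        _ ≤ _ := hk
    calc (ν (Set.Iic (r S))).toReal
        ≤ (∫ l in Set.Iic (r S), |Real.log l| ∂ν) / Real.log 2 := by
          rw [le_div_iff₀ hlog2]; exact this
      _ = (∫ l in Set.Iic (r S), |Real.log l| ∂ν) * (Real.log 2)⁻¹ := div_eq_mul_inv _ _
  · have := hPr.mul_const (Real.log 2)⁻¹
    simpa using this








/-- **High-SNR expansion of the waterfilling capacity.** Let `ν` be a Borel probability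
measure on `(0,∞)` with `∫ |log λ| dν < ∞`, and for each `S > 0` let `μ(S) > 0` be the
water level, i.e. `∫ max (1/μ(S) - 1/λ) 0 dν = S`. Then
`∫ max (log (λ/μ(S))) 0 dν - log S → ∫ log λ dν` as `S → ∞`. -/
theorem waterfilling_capacity_highSNR
    (ν : Measure ℝ) [IsProbabilityMeasure ν] (hν : ν (Set.Iic 0) = 0)
    (hlog : Integrable (fun l => Real.log l) ν)
    (μfun : ℝ → ℝ)
    (hμ : ∀ S : ℝ, 0 < S → 0 < μfun S ∧ ∫ l, max (1 / μfun S - 1 / l) 0 ∂ν = S) :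
    Tendsto (fun S => (∫ l, max (Real.log (l / μfun S)) 0 ∂ν) - Real.log S)
      atTop (nhds (∫ l, Real.log l ∂ν)) := by
  -- basic notation
  have hFle1 : ∀ m : ℝ, (ν (Set.Ioi m)).toReal ≤ 1 := by
    intro m
    have h := prob_le_one (μ := ν) (s := Set.Ioi m)
    have := ENNReal.toReal_mono (by simp) h
    simpa using this
  have hGnn : ∀ m : ℝ, 0 < m → 0 ≤ ∫ l in Set.Ioi m, 1 / l ∂ν := by
    intro m hm
    apply setIntegral_nonneg measurableSet_Ioi
    intro l hl
    have : 0 < l := lt_trans hm hl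
    positivity
  -- S ≤ 1/m and m ≤ 1/S
  have hmle : ∀ S : ℝ, 0 < S → μfun S ≤ 1 / S := by
    intro S hS
    obtain ⟨hm0, hC⟩ := hμ S hS
    rw [wf_constraint ν hν hm0] at hC
    have h1 : S ≤ 1 / μfun S := by
      have := hGnn _ hm0
      have h2 : (ν (Set.Ioi (μfun S))).toReal * (1 / μfun S) ≤ 1 / μfun S := by
        have := hFle1 (μfun S)
        have hmi : (0:ℝ) ≤ 1 / μfun S := by positivity
        nlinarith
      linarith
    rw [le_div_iff₀ hm0] at h1
    rw [le_div_iff₀ hS]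
    linarith [mul_comm S (μfun S)]
  -- μfun tends to 0 within (0,∞)
  have hm : Tendsto μfun atTop (nhdsWithin 0 (Set.Ioi 0)) := by
    rw [tendsto_nhdsWithin_iff]
    constructor
    · apply squeeze_zero'
      · filter_upwards [eventually_gt_atTop (0:ℝ)] with S hS
        exact (hμ S hS).1.le
      · filter_upwards [eventually_gt_atTop (0:ℝ)] with S hS
        exact hmle S hS
      · have h := tendsto_inv_atTop_zero (𝕜 := ℝ)
        apply h.congr
        intro x; rw [one_div]
    · filter_upwards [eventually_gt_atTop (0:ℝ)] with S hS
      exact (hμ S hS).1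
  -- water level equation: S * m = F - m*G
  have heq : ∀ S : ℝ, 0 < S → S * μfun S
      = (ν (Set.Ioi (μfun S))).toReal
        - μfun S * ∫ l in Set.Ioi (μfun S), 1 / l ∂ν := by
    intro S hS
    obtain ⟨hm0, hC⟩ := hμ S hS
    rw [wf_constraint ν hν hm0] at hC
    have := congrArg (fun x => x * μfun S) hC
    rw [sub_mul, mul_assoc, one_div, inv_mul_cancel₀ (ne_of_gt hm0), mul_one] at this
    rw [← this]; ring
  -- q → 0 and F → 1
  have hq : Tendsto (fun S => (ν (Set.Iic (μfun S))).toReal) atTop (nhds 0) :=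
    wf_q_tendsto ν hν hlog μfun hm
  have hFq : ∀ S : ℝ, (ν (Set.Ioi (μfun S))).toReal = 1 - (ν (Set.Iic (μfun S))).toReal := by
    intro S
    have h := measure_add_measure_compl (μ := ν) (measurableSet_Ioi (a := μfun S))
    rw [Set.compl_Ioi, measure_univ] at h
    have h2 := congrArg ENNReal.toReal h
    rw [ENNReal.toReal_add (measure_ne_top _ _) (measure_ne_top _ _)] at h2
    simp at h2
    linarith
  have hF : Tendsto (fun S => (ν (Set.Ioi (μfun S))).toReal) atTop (nhds 1) := by
    simp only [hFq]
    have := tendsto_const_nhds (x := (1:ℝ)) (f := atTop (α := ℝ)) |>.sub hq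
    simpa using this
  -- H = m*G → 0
  have hsqrtm : Tendsto (fun S => Real.sqrt (μfun S)) atTop (nhdsWithin 0 (Set.Ioi 0)) := by
    rw [tendsto_nhdsWithin_iff]
    constructor
    · have hcont : Tendsto Real.sqrt (nhds 0) (nhds 0) := by
        simpa using (Real.continuous_sqrt.tendsto 0)
      exact hcont.comp (hm.mono_right nhdsWithin_le_nhds)
    · filter_upwards [eventually_gt_atTop (0:ℝ)] with S hS
      exact Real.sqrt_pos.2 (hμ S hS).1
  have hq' : Tendsto (fun S => (ν (Set.Iic (Real.sqrt (μfun S)))).toReal) atTop (nhds 0) :=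
    wf_q_tendsto ν hν hlog _ hsqrtm
  have hsq0 : Tendsto (fun S => Real.sqrt (μfun S)) atTop (nhds 0) :=
    hsqrtm.mono_right nhdsWithin_le_nhds
  have hH : Tendsto (fun S => μfun S * ∫ l in Set.Ioi (μfun S), 1 / l ∂ν) atTop (nhds 0) := by
    apply squeeze_zero'
    · filter_upwards [eventually_gt_atTop (0:ℝ)] with S hS
      exact mul_nonneg (hμ S hS).1.le (hGnn _ (hμ S hS).1)
    · filter_upwards [eventually_gt_atTop (0:ℝ)] with S hS
      exact wf_H_bound ν (hμ S hS).1
    · have := hq'.add hsq0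
      simpa using this
  -- S * m → 1 and log (S*m) → 0
  have hSm : Tendsto (fun S => S * μfun S) atTop (nhds 1) := by
    have h1 : Tendsto (fun S => (ν (Set.Ioi (μfun S))).toReal
        - μfun S * ∫ l in Set.Ioi (μfun S), 1 / l ∂ν) atTop (nhds 1) := by
      have := hF.sub hH
      simpa using this
    apply h1.congr'
    filter_upwards [eventually_gt_atTop (0:ℝ)] with S hS
    exact (heq S hS).symm
  have hlogSm : Tendsto (fun S => Real.log (S * μfun S)) atTop (nhds 0) := by
    have hcont : ContinuousAt Real.log 1 := Real.continuousAt_log one_ne_zero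
    have := hcont.tendsto.comp hSm
    simpa [Real.log_one, Function.comp_def] using this
  -- J tail → ∫ log
  have hPm : Tendsto (fun S => ∫ l in Set.Iic (μfun S), |Real.log l| ∂ν) atTop (nhds 0) :=
    (wf_P_tendsto ν hν hlog).comp hm
  have hJerr : Tendsto (fun S => ∫ l in Set.Iic (μfun S), Real.log l ∂ν) atTop (nhds 0) := by
    apply squeeze_zero_norm' _ hPm
    filter_upwards with S
    calc ‖∫ l in Set.Iic (μfun S), Real.log l ∂ν‖
        ≤ ∫ l in Set.Iic (μfun S), ‖Real.log l‖ ∂ν := norm_integral_le_integral_norm _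
      _ = ∫ l in Set.Iic (μfun S), |Real.log l| ∂ν := by simp [Real.norm_eq_abs]
  have hJ : Tendsto (fun S => ∫ l in Set.Ioi (μfun S), Real.log l ∂ν) atTop
      (nhds (∫ l, Real.log l ∂ν)) := by
    have hsplit : ∀ S : ℝ, ∫ l in Set.Ioi (μfun S), Real.log l ∂ν
        = (∫ l, Real.log l ∂ν) - ∫ l in Set.Iic (μfun S), Real.log l ∂ν := by
      intro S
      have h := integral_add_compl (measurableSet_Iic (a := μfun S)) hlog
      rw [Set.compl_Iic] at h
      linarith
    simp only [hsplit]
    have := tendsto_const_nhds (x := ∫ l, Real.log l ∂ν) (f := atTop (α := ℝ)) |>.sub hJerr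
    simpa using this
  -- D term → 0
  have hD : Tendsto (fun S => (ν (Set.Iic (μfun S))).toReal * Real.log S) atTop (nhds 0) := by
    apply squeeze_zero'
    · filter_upwards [eventually_ge_atTop (1:ℝ)] with S hS
      exact mul_nonneg ENNReal.toReal_nonneg (Real.log_nonneg hS)
    · filter_upwards [eventually_ge_atTop (2:ℝ)] with S hS
      have hS0 : (0:ℝ) < S := by linarith
      have hm0 := (hμ S hS0).1
      have hm1 : μfun S < 1 := by
        have := hmle S hS0
        have h2 : 1 / S ≤ 1 / 2 := by
          apply one_div_le_one_div_of_le <;> linarith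
        linarith
      have hk := wf_key_ineq ν hν hlog hm0 hm1
      have hlogS : Real.log S ≤ -Real.log (μfun S) := by
        have h1 : S ≤ 1 / μfun S := by
          rw [le_div_iff₀ hm0]
          have := hmle S hS0
          rw [le_div_iff₀ hS0] at this
          linarith [mul_comm (μfun S) S]
        have := Real.log_le_log hS0 h1
        rw [Real.log_div one_ne_zero (ne_of_gt hm0), Real.log_one] at this
        linarith
      calc (ν (Set.Iic (μfun S))).toReal * Real.log S
          ≤ (ν (Set.Iic (μfun S))).toReal * (-Real.log (μfun S)) :=
            mul_le_mul_of_nonneg_left hlogS ENNReal.toReal_nonneg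
        _ ≤ ∫ l in Set.Iic (μfun S), |Real.log l| ∂ν := hk
    · exact hPm
  -- final assembly
  have hfinal : Tendsto (fun S => (∫ l in Set.Ioi (μfun S), Real.log l ∂ν)
      - (ν (Set.Ioi (μfun S))).toReal * Real.log (S * μfun S)
      - (ν (Set.Iic (μfun S))).toReal * Real.log S) atTop (nhds (∫ l, Real.log l ∂ν)) := by
    have := (hJ.sub (hF.mul hlogSm)).sub hD
    simpa using this
  apply hfinal.congr'
  filter_upwards [eventually_gt_atTop (0:ℝ)] with S hS
  obtain ⟨hm0, _⟩ := hμ S hS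
  rw [wf_capacity ν hν hlog hm0]
  rw [Real.log_mul (ne_of_gt hS) (ne_of_gt hm0)]
  rw [hFq S]
  ring
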